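/- Consider the Euler system Ṗ₁ = 8P₂², Ṗ₂ = 2P₂(3P₄ - P₁), Ṗ₃ = 2P₁(P₃ - 2P₂) - 6P₃P₄, Ṗ₄ = 0 on ℝ⁴. Then k = P₁² + 4P₂P₃ and H = 2P₂P₃ - 2P₂² + 3P₁P₄ - (9/2)P₄² are constants of motion. -/

import Mathlib

/-- along solutions of the Euler system
`Ṗ₁ = 8P₂², Ṗ₂ = 2P₂(3P₄ - P₁), Ṗ₃ = 2P₁(P₃ - 2P₂) - 6P₃P₄, Ṗ₄ = 0`,
the functions `k = P₁² + 4P₂P₃` and `H = 2P₂P₃ - 2P₂² + 3P₁P₄ - (9/2)P₄²`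
are constant. -/
theorem stmt16 (P1 P2 P3 P4 : ℝ → ℝ)
    (hd1 : Differentiable ℝ P1) (hd2 : Differentiable ℝ P2)
    (hd3 : Differentiable ℝ P3) (hd4 : Differentiable ℝ P4)
    (h1 : ∀ t, deriv P1 t = 8 * (P2 t) ^ 2)
    (h2 : ∀ t, deriv P2 t = 2 * P2 t * (3 * P4 t - P1 t))
    (h3 : ∀ t, deriv P3 t = 2 * P1 t * (P3 t - 2 * P2 t) - 6 * P3 t * P4 t)
    (h4 : ∀ t, deriv P4 t = 0) :
    (∀ t, deriv (fun s => (P1 s) ^ 2 + 4 * P2 s * P3 s) t = 0) ∧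
    (∀ t, deriv (fun s => 2 * P2 s * P3 s - 2 * (P2 s) ^ 2 + 3 * P1 s * P4 s
        - (9 / 2) * (P4 s) ^ 2) t = 0) := by
  have key : ∀ t,
      HasDerivAt P1 (8 * (P2 t) ^ 2) t ∧
      HasDerivAt P2 (2 * P2 t * (3 * P4 t - P1 t)) t ∧
      HasDerivAt P3 (2 * P1 t * (P3 t - 2 * P2 t) - 6 * P3 t * P4 t) t ∧
      HasDerivAt P4 0 t := fun t =>
    ⟨h1 t ▸ (hd1 t).hasDerivAt, h2 t ▸ (hd2 t).hasDerivAt,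
     h3 t ▸ (hd3 t).hasDerivAt, h4 t ▸ (hd4 t).hasDerivAt⟩
  constructor <;> intro t <;> obtain ⟨H1, H2, H3, H4⟩ := key t
  · exact ((H1.pow 2).add ((H2.const_mul 4).mul H3)).deriv.trans (by ring)
  · refine (((((H2.const_mul 2).mul H3).sub ((H2.pow 2).const_mul 2)).add
      ((H1.const_mul 3).mul H4)).sub ((H4.pow 2).const_mul (9/2)) |>.deriv).trans ?_; ring
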